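/- arXiv:2510.09442 — 3 statements merged into one kernel-verified Lean document; each statement's English description precedes it below -/
import Mathlib

section
/- Let V be a real Hilbert space, a : V × V → ℝ a bounded coercive bilinear form, q : V → ℝ^N a surjective continuous linear map, W := ker q, and Ṽ := {v ∈ V : a(v,w) = 0 for all w ∈ W}. Then the restriction of q to Ṽ is a linear bijection from Ṽ onto ℝ^N. In particular, for every i ∈ {1,…,N} there exists a unique φ_i ∈ Ṽ with q(φ_i) = e_i (the i-th standard basis vector of ℝ^N), the family (φ_1,…,φ_N) is a basis of Ṽ, and every v ∈ Ṽ satisfies v = Σ_{i=1}^N q_i(v) φ_i. -/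
/-- Prototypical basis (Lemma 3.1, abstract form): the quantities of interest `q`
restricted to the `a`-orthogonal complement `Ṽ` of the fine-scale space `W = ker q`
form a bijection onto `ℝ^N`; for each `i` there is a unique `φᵢ ∈ Ṽ` with
`q φᵢ = eᵢ`, the family `(φᵢ)` is linearly independent (hence a basis of `Ṽ`),
and every `v ∈ Ṽ` satisfies `v = ∑ i, qᵢ(v) • φᵢ`. -/
theorem stmt_1 {V : Type*} [NormedAddCommGroup V] [InnerProductSpace ℝ V] [CompleteSpace V]
    (a : V →ₗ[ℝ] V →ₗ[ℝ] ℝ) (C_a c_a : ℝ) (hCa : 0 < C_a) (hca : 0 < c_a)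
    (ha_bdd : ∀ v w : V, |a v w| ≤ C_a * ‖v‖ * ‖w‖)
    (ha_coer : ∀ v : V, c_a * ‖v‖ ^ 2 ≤ a v v)
    (N : ℕ) (q : V →L[ℝ] EuclideanSpace ℝ (Fin N)) (hq : Function.Surjective q)
    (W : Set V) (hW : W = {w : V | q w = 0})
    (Vt : Set V) (hVt : Vt = {v : V | ∀ w ∈ W, a v w = 0}) :
    Set.BijOn (⇑q) Vt Set.univ ∧
    (∀ i : Fin N, ∃! x : V, x ∈ Vt ∧ q x = EuclideanSpace.single i (1 : ℝ)) ∧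
    (∀ φ : Fin N → V,
      (∀ i : Fin N, φ i ∈ Vt ∧ q (φ i) = EuclideanSpace.single i (1 : ℝ)) →
      LinearIndependent ℝ φ ∧ ∀ v ∈ Vt, v = ∑ i : Fin N, q v i • φ i) := by
  classical
  -- the continuous bilinear form
  have hA' : ∀ v w : V, ‖a v w‖ ≤ C_a * ‖v‖ * ‖w‖ := fun v w => by
    simpa using ha_bdd v w
  let A : V →L[ℝ] V →L[ℝ] ℝ := LinearMap.mkContinuous₂ a C_a hA'
  have hAapp : ∀ v w : V, A v w = a v w := fun v w => rfl
  -- the fine-scale space as a submodule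
  set W' : Submodule ℝ V := LinearMap.ker (q : V →ₗ[ℝ] EuclideanSpace ℝ (Fin N)) with hW'def
  have hWW : W = (W' : Set V) := by
    rw [hW]; ext x; simp [hW'def, LinearMap.mem_ker]
  haveI : CompleteSpace W' := (ContinuousLinearMap.isClosed_ker q).completeSpace_coe
  -- the restricted bilinear form on W'
  let B : W' →L[ℝ] W' →L[ℝ] ℝ := ((A.comp W'.subtypeL).flip.comp W'.subtypeL).flip
  have hB : ∀ u w : W', B u w = a (u : V) (w : V) := fun u w => rfl
  have hBco : IsCoercive B := by
    refine ⟨c_a, hca, fun u => ?_⟩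
    have h1 := ha_coer (u : V)
    have h2 : ‖u‖ = ‖(u : V)‖ := rfl
    rw [hB, h2]
    nlinarith [h1]
  -- decomposition: every v differs from an element of Vt by an element of W'
  have hdecomp : ∀ v : V, ∃ w : W', v - (w : V) ∈ Vt := by
    intro v
    let f : W' →L[ℝ] ℝ := (A v).comp W'.subtypeL
    let g : W' := (InnerProductSpace.toDual ℝ W').symm f
    refine ⟨hBco.continuousLinearEquivOfBilin.symm g, ?_⟩
    rw [hVt]
    intro w hw
    rw [hWW] at hw
    have h1 : B (hBco.continuousLinearEquivOfBilin.symm g) ⟨w, hw⟩ = f ⟨w, hw⟩ := by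
      rw [← hBco.continuousLinearEquivOfBilin_apply, ContinuousLinearEquiv.apply_symm_apply]
      exact InnerProductSpace.toDual_symm_apply
    have h2 : a ((hBco.continuousLinearEquivOfBilin.symm g : W') : V) w = a v w := by
      rw [← hB _ ⟨w, hw⟩] at *
      simpa [f, hAapp] using h1
    simp [map_sub, LinearMap.sub_apply, h2]
  -- injectivity on Vt
  have hzero : ∀ v ∈ Vt, q v = 0 → v = 0 := by
    intro v hv hqv
    have hvW : v ∈ W := by rw [hW]; exact hqv
    rw [hVt] at hv
    have h0 : a v v = 0 := hv v hvW
    have h1 := ha_coer v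
    have h2 : ‖v‖ ^ 2 = 0 := by nlinarith [sq_nonneg ‖v‖]
    have : ‖v‖ = 0 := by
      have := sq_eq_zero_iff.mp h2
      exact this
    exact norm_eq_zero.mp this
  have hsub : ∀ v₁ ∈ Vt, ∀ v₂ ∈ Vt, v₁ - v₂ ∈ Vt := by
    intro v₁ h₁ v₂ h₂
    rw [hVt] at *
    intro w hw
    simp [map_sub, LinearMap.sub_apply, h₁ w hw, h₂ w hw]
  have hinj : Set.InjOn (⇑q) Vt := by
    intro v₁ h₁ v₂ h₂ hq12
    have h0 : q (v₁ - v₂) = 0 := by rw [map_sub, hq12, sub_self]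
    exact sub_eq_zero.mp (hzero _ (hsub v₁ h₁ v₂ h₂) h0)
  have hsurj : Set.SurjOn (⇑q) Vt Set.univ := by
    intro y _
    obtain ⟨v, hv⟩ := hq y
    obtain ⟨w, hw⟩ := hdecomp v
    refine ⟨v - (w : V), hw, ?_⟩
    have hqw : q (w : V) = 0 := LinearMap.mem_ker.mp w.2
    rw [map_sub, hqw, sub_zero, hv]
  refine ⟨⟨Set.mapsTo_univ _ _, hinj, hsurj⟩, ?_, ?_⟩
  · intro i
    obtain ⟨x, hx, hqx⟩ := hsurj (Set.mem_univ (EuclideanSpace.single i (1 : ℝ)))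
    refine ⟨x, ⟨hx, hqx⟩, ?_⟩
    rintro y ⟨hy, hqy⟩
    exact hinj hy hx (hqy.trans hqx.symm)
  have key : ∀ (c : Fin N → ℝ) (j : Fin N),
      (∑ i : Fin N, c i • EuclideanSpace.single i (1:ℝ)) j = c j := by
    intro c j
    have h : (∑ i : Fin N, c i • EuclideanSpace.single i (1:ℝ)) j
        = ∑ i : Fin N, (c i • EuclideanSpace.single i (1:ℝ)) j :=
      by rw [WithLp.ofLp_sum]; exact Finset.sum_apply j Finset.univ _
    rw [h]
    simp [PiLp.smul_apply, EuclideanSpace.single_apply]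
  · intro φ hφ
    constructor
    · rw [Fintype.linearIndependent_iff]
      intro c hc j
      have h0 : q (∑ i : Fin N, c i • φ i) = 0 := by rw [hc, map_zero]
      rw [map_sum] at h0
      simp only [map_smul, (hφ _).2] at h0
      have h1 := congrArg (fun y : EuclideanSpace ℝ (Fin N) => y j) h0
      simpa [key] using h1
    · intro v hv
      have hs : (∑ i : Fin N, q v i • φ i) ∈ Vt := by
        rw [hVt]
        intro w hw
        rw [map_sum, LinearMap.sum_apply]
        refine Finset.sum_eq_zero fun i _ => ?_
        have hi := (hφ i).1
        rw [hVt] at hi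
        rw [map_smul, LinearMap.smul_apply, hi w hw, smul_zero]
      refine hinj hv hs ?_
      rw [map_sum]
      simp only [map_smul, (hφ _).2]
      ext j
      exact (key (fun i => q v i) j).symm
end

section
/- Let V be a real Hilbert space, a : V × V → ℝ a symmetric bounded coercive bilinear form with coercivity constant c_a, W a closed subspace of V, and Ṽ := {v ∈ V : a(v,w) = 0 for all w ∈ W}. Let F : V → ℝ be a continuous linear functional, u ∈ V with a(u,v) = F(v) for all v ∈ V, and ũ ∈ Ṽ with a(ũ, ṽ) = F(ṽ) for all ṽ ∈ Ṽ. Then c_a ‖u − ũ‖² ≤ a(u − ũ, u − ũ) = F(u − ũ). Consequently, if ε ≥ 0 is such that |F(w)| ≤ ε ‖w‖ for all w ∈ W, then ‖u − ũ‖ ≤ ε / c_a. -/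
set_option maxHeartbeats 1000000


/-- Error mechanism (3.14) in the proof of Theorem 3.2: for the prototypical
multiscale method, `c_a ‖u − uH‖² ≤ a(u − uH, u − uH) = F(u − uH)`; consequently, if
`|F w| ≤ ε ‖w‖` for all `w ∈ W`, then `‖u − uH‖ ≤ ε / c_a`. -/
theorem stmt_5 {V : Type*} [NormedAddCommGroup V] [InnerProductSpace ℝ V] [CompleteSpace V]
    (a : V →ₗ[ℝ] V →ₗ[ℝ] ℝ) (C_a c_a : ℝ) (hCa : 0 < C_a) (hca : 0 < c_a)
    (ha_bdd : ∀ v w : V, |a v w| ≤ C_a * ‖v‖ * ‖w‖)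
    (ha_coer : ∀ v : V, c_a * ‖v‖ ^ 2 ≤ a v v)
    (ha_symm : ∀ v w : V, a v w = a w v)
    (W : Submodule ℝ V) (hWclosed : IsClosed (W : Set V))
    (Vt : Set V) (hVt : Vt = {v : V | ∀ w ∈ W, a v w = 0})
    (F : V →L[ℝ] ℝ) (u : V) (hu : ∀ v : V, a u v = F v)
    (uH : V) (huHmem : uH ∈ Vt) (huH : ∀ vt ∈ Vt, a uH vt = F vt) :
    c_a * ‖u - uH‖ ^ 2 ≤ a (u - uH) (u - uH) ∧ a (u - uH) (u - uH) = F (u - uH) ∧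
      ∀ ε : ℝ, 0 ≤ ε → (∀ w ∈ W, |F w| ≤ ε * ‖w‖) → ‖u - uH‖ ≤ ε / c_a := by
  set e := u - uH with he
  -- `a uH e = 0` since `a u uH = F uH = a uH uH`
  have haue : ∀ v, a u v = F v := hu
  have h1 : a uH e = 0 := by
    have h2 : a uH uH = F uH := huH uH huHmem
    have h3 : a uH u = a u uH := ha_symm uH u
    have h4 : a u uH = F uH := hu uH
    have : a uH e = a uH u - a uH uH := by
      simp [he, map_sub]
    rw [this, h3, h4, h2, sub_self]
  have haee : (a e) e = F e := by
    have : a e e = a u e - a uH e := by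
      have : a e = a u - a uH := by simp [he, map_sub]
      rw [this]; simp
    rw [this, h1, hu e, sub_zero]
  refine ⟨ha_coer e, haee, ?_⟩
  intro ε hε hFW
  -- Show that `e ∈ W` using Lax–Milgram on the Hilbert space `W`.
  haveI : CompleteSpace W := hWclosed.completeSpace_coe
  -- bundle `a` as a continuous bilinear map
  set A : V →L[ℝ] V →L[ℝ] ℝ :=
    LinearMap.mkContinuous₂ a C_a (fun v w => (Real.norm_eq_abs _).trans_le (ha_bdd v w)) with hA
  have hAapp : ∀ v w : V, A v w = a v w := fun v w => rfl
  -- restrict to W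
  set B : W →L[ℝ] W →L[ℝ] ℝ := ((A.comp W.subtypeL).flip.comp W.subtypeL).flip with hB
  have hBapp : ∀ v w : W, B v w = a v w := fun v w => rfl
  have hBcoer : IsCoercive B := by
    refine ⟨c_a, hca, fun w => ?_⟩
    have := ha_coer (w : V)
    rw [hBapp]
    calc c_a * ‖w‖ * ‖w‖ = c_a * ‖(w : V)‖ ^ 2 := by
          rw [Submodule.norm_coe]; ring
      _ ≤ a w w := ha_coer _
  -- the functional `w ↦ a e w` on `W`
  set f : W →L[ℝ] ℝ := (A e).comp W.subtypeL with hf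
  obtain ⟨p, hp⟩ : ∃ p : W, ∀ w : W, B p w = f w := by
    refine ⟨hBcoer.continuousLinearEquivOfBilin.symm
      ((InnerProductSpace.toDual ℝ W).symm f), fun w => ?_⟩
    have := hBcoer.continuousLinearEquivOfBilin_apply
      (hBcoer.continuousLinearEquivOfBilin.symm ((InnerProductSpace.toDual ℝ W).symm f)) w
    rw [hBcoer.continuousLinearEquivOfBilin.apply_symm_apply] at this
    rw [← this, InnerProductSpace.toDual_symm_apply]
  -- p satisfies `a p w = a e w` for all `w ∈ W`, hence `e - p ∈ Ṽ`
  have hpW : ∀ w ∈ W, a (p : V) w = a e w := by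
    intro w hw
    have := hp ⟨w, hw⟩
    rw [hBapp, hf] at this
    exact this
  have hepVt : (e - (p : V)) ∈ Vt := by
    rw [hVt]
    intro w hw
    have := hpW w hw
    simp [map_sub, this]
  -- also `e` is a-orthogonal to every element of Ṽ
  have heVt : ∀ v ∈ Vt, a e v = 0 := by
    intro v hv
    have h2 : a uH v = F v := huH v hv
    have h3 : a u v = F v := hu v
    have : a e v = a u v - a uH v := by
      have : a e = a u - a uH := by simp [he, map_sub]
      rw [this]; simp
    rw [this, h2, h3, sub_self]
  -- then `a (e - p) (e - p) = 0`, so `e = p ∈ W`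
  have heq : a (e - (p : V)) (e - (p : V)) = 0 := by
    have h2 : a e (e - (p : V)) = 0 := heVt _ hepVt
    have h3 : a (e - (p : V)) (p : V) = 0 := by
      rw [hVt] at hepVt
      exact hepVt p p.2
    have h4 : a (p : V) (e - (p : V)) = 0 := by rw [ha_symm]; exact h3
    have : (a (e - (p : V))) (e - (p : V)) = a e (e - (p : V)) - a (p : V) (e - (p : V)) := by
      have : a (e - (p : V)) = a e - a (p : V) := by simp [map_sub]
      rw [this]; simp
    rw [this, h2, h4, sub_zero]
  have heW : e ∈ W := by
    have hn := ha_coer (e - (p : V))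
    rw [heq] at hn
    have : e = (p : V) := by
      by_contra hne
      have hpos : 0 < ‖e - (p : V)‖ := norm_pos_iff.mpr (sub_ne_zero.mpr hne)
      nlinarith [mul_pos hca (pow_pos hpos 2)]
    rw [this]; exact p.2
  -- conclude
  have hFe : |F e| ≤ ε * ‖e‖ := hFW e heW
  have key : c_a * ‖e‖ ^ 2 ≤ ε * ‖e‖ := by
    calc c_a * ‖e‖ ^ 2 ≤ a e e := ha_coer e
      _ = F e := haee
      _ ≤ |F e| := le_abs_self _
      _ ≤ ε * ‖e‖ := hFe
  rcases eq_or_lt_of_le (norm_nonneg e) with h | h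
  · rw [← h]; positivity
  · rw [le_div_iff₀ hca]
    nlinarith
end

section
/- Let d ≥ 1, x₀ ∈ ℝ^d, R > 0, and let v : ℝ^d → ℝ be defined by v(x) = max(0, R − ‖x − x₀‖). Then the inverse inequality ∫_{ℝ^d} ‖Dv(x)‖² dx ≤ ((d+1)(d+2)/2) · R^{−2} · ∫_{ℝ^d} v(x)² dx holds, where Dv(x) denotes the Fréchet derivative of v at x (taken to be 0 at points where v is not differentiable). -/
open MeasureTheory
open Metric Set

/-- Inverse inequality (3.8) realized for the bubble functions of Section 7: with
`v(x) = max(0, R − ‖x − x₀‖)` and `Dv` its Fréchet derivative (zero where `v` is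
not differentiable), `∫ ‖Dv‖² ≤ ((d+1)(d+2)/2) R⁻² ∫ v²`. -/
theorem stmt_13 (d : ℕ) (hd : 1 ≤ d) (x₀ : EuclideanSpace ℝ (Fin d)) (R : ℝ) (hR : 0 < R)
    (v : EuclideanSpace ℝ (Fin d) → ℝ) (hv : v = fun x => max 0 (R - ‖x - x₀‖)) :
    ∫ x : EuclideanSpace ℝ (Fin d), ‖fderiv ℝ v x‖ ^ 2 ≤
      (((d : ℝ) + 1) * ((d : ℝ) + 2) / 2) * (R ^ 2)⁻¹ *
        ∫ x : EuclideanSpace ℝ (Fin d), v x ^ 2 := by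
  subst hv
  obtain ⟨k, rfl⟩ : ∃ k, d = k + 1 := ⟨d - 1, (Nat.succ_pred_eq_of_pos hd).symm⟩
  haveI : Nontrivial (EuclideanSpace ℝ (Fin (k + 1))) := Module.nontrivial_of_finrank_pos
    (by rw [finrank_euclideanSpace_fin]; omega)
  have hdim : Module.finrank ℝ (EuclideanSpace ℝ (Fin (k + 1))) = k + 1 :=
    finrank_euclideanSpace_fin
  set v : EuclideanSpace ℝ (Fin (k + 1)) → ℝ := fun x => max 0 (R - ‖x - x₀‖) with hv
  set ω : ℝ := (volume (ball (0 : EuclideanSpace ℝ (Fin (k + 1))) 1)).toReal with hω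
  -- Lipschitz
  have hlip : LipschitzWith 1 v := by
    have h1 : LipschitzWith 1 fun x : EuclideanSpace ℝ (Fin (k + 1)) => ‖x - x₀‖ := by
      simpa [dist_eq_norm] using LipschitzWith.dist_left x₀
    have h2 : LipschitzWith 1 (fun t : ℝ => R - t) :=
      LipschitzWith.of_dist_le_mul fun a b => by
        rw [Real.dist_eq, Real.dist_eq, show R - a - (R - b) = -(a - b) by ring, abs_neg]
        simp
    simpa using ((h2.comp h1).const_max 0)
  -- fderiv vanishes outside the closed ball
  have hzero : ∀ x : EuclideanSpace ℝ (Fin (k + 1)), R < ‖x - x₀‖ → fderiv ℝ v x = 0 := by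
    intro x hx
    have hopen : IsOpen {y : EuclideanSpace ℝ (Fin (k + 1)) | R < ‖y - x₀‖} :=
      isOpen_lt continuous_const ((continuous_id.sub continuous_const).norm)
    have hev : v =ᶠ[nhds x] fun _ => (0 : ℝ) := by
      filter_upwards [hopen.mem_nhds hx] with y hy
      have : R < ‖y - x₀‖ := hy
      simp only [hv]
      rw [max_eq_left (by linarith)]
    rw [hev.fderiv_eq, fderiv_const_apply]
  -- pointwise bound
  have hbound : ∀ x : EuclideanSpace ℝ (Fin (k + 1)), ‖fderiv ℝ v x‖ ^ 2 ≤
      Set.indicator (closedBall x₀ R) (fun _ => (1 : ℝ)) x := by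
    intro x
    by_cases hx : x ∈ closedBall x₀ R
    · rw [Set.indicator_of_mem hx]
      have h := norm_fderiv_le_of_lipschitz ℝ (x₀ := x) hlip
      calc ‖fderiv ℝ v x‖ ^ 2 ≤ 1 ^ 2 := by
            apply pow_le_pow_left₀ (norm_nonneg _); simpa using h
        _ = 1 := one_pow 2
    · rw [Set.indicator_of_notMem hx, hzero x (by
        simpa [mem_closedBall, dist_eq_norm, not_le] using hx)]
      simp
  -- LHS bound
  have hLHS : ∫ x : EuclideanSpace ℝ (Fin (k + 1)), ‖fderiv ℝ v x‖ ^ 2 ≤ ω * R ^ (k + 1) := by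
    have hint : Integrable (Set.indicator (closedBall x₀ R) (fun _ => (1 : ℝ))) := by
      rw [integrable_indicator_iff measurableSet_closedBall]
      exact integrableOn_const measure_closedBall_lt_top.ne
    have h := integral_mono_of_nonneg
      (Filter.Eventually.of_forall fun x => by positivity) hint
      (Filter.Eventually.of_forall hbound)
    rw [integral_indicator_const (1 : ℝ) measurableSet_closedBall] at h
    have hcb : (volume (closedBall x₀ R)).toReal = ω * R ^ (k + 1) := by
      rw [Measure.addHaar_closedBall volume x₀ hR.le, hdim, ENNReal.toReal_mul,
        ENNReal.toReal_ofReal (by positivity)]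
      ring
    calc _ ≤ _ := h
      _ = ω * R ^ (k + 1) := by rw [smul_eq_mul, mul_one, measureReal_def, hcb]
  refine hLHS.trans (le_of_eq ?_)
  -- compute ∫ v² via polar coordinates
  have hradial : ∫ x : EuclideanSpace ℝ (Fin (k + 1)), v x ^ 2 =
      ((k : ℝ) + 1) * ω * ∫ y in Ioi (0 : ℝ), y ^ k * (max 0 (R - y)) ^ 2 := by
    have h1 : ∫ x : EuclideanSpace ℝ (Fin (k + 1)), v x ^ 2
        = ∫ x : EuclideanSpace ℝ (Fin (k + 1)), (fun r : ℝ => (max 0 (R - r)) ^ 2) ‖x‖ := by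
      simp only [hv]
      exact integral_sub_right_eq_self (μ := volume)
        (fun x : EuclideanSpace ℝ (Fin (k + 1)) => (max 0 (R - ‖x‖)) ^ 2) x₀
    rw [h1, integral_fun_norm_addHaar volume (fun r : ℝ => (max 0 (R - r)) ^ 2), hdim]
    simp only [nsmul_eq_mul, smul_eq_mul, Nat.add_sub_cancel, Nat.cast_add, Nat.cast_one]
    rw [measureReal_def, ← hω]
    ring
  -- compute the radial integral
  have hIoi : ∫ y in Ioi (0 : ℝ), y ^ k * (max 0 (R - y)) ^ 2
      = ∫ y in Set.Ioc (0 : ℝ) R, y ^ k * (R - y) ^ 2 := by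
    have hcont : Continuous fun y : ℝ => y ^ k * (max 0 (R - y)) ^ 2 :=
      (continuous_pow k).mul
        ((continuous_const.max (continuous_const.sub continuous_id)).pow 2)
    have hsplit : Set.Ioc (0 : ℝ) R ∪ Set.Ioi R = Set.Ioi 0 := Set.Ioc_union_Ioi_eq_Ioi hR.le
    have heq : Set.EqOn (fun y : ℝ => y ^ k * (max 0 (R - y)) ^ 2) (fun _ => (0 : ℝ))
        (Set.Ioi R) := by
      intro y hy
      have hy' : R < y := hy
      simp only
      rw [max_eq_left (by linarith)]
      ring
    have h2 : ∫ y in Set.Ioi R, y ^ k * (max 0 (R - y)) ^ 2 = 0 := by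
      rw [setIntegral_congr_fun measurableSet_Ioi heq]
      simp
    have h3 : IntegrableOn (fun y : ℝ => y ^ k * (max 0 (R - y)) ^ 2) (Set.Ioc 0 R) :=
      hcont.integrableOn_Ioc
    have h4 : IntegrableOn (fun y : ℝ => y ^ k * (max 0 (R - y)) ^ 2) (Set.Ioi R) :=
      (integrableOn_congr_fun heq measurableSet_Ioi).2 (integrableOn_zero)
    rw [← hsplit, setIntegral_union (Set.Ioc_disjoint_Ioi le_rfl) measurableSet_Ioi h3 h4, h2,
      add_zero]
    refine setIntegral_congr_fun measurableSet_Ioc (fun y hy => ?_)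
    rw [max_eq_right (by linarith [hy.2])]
  have hval : ∫ y in Set.Ioc (0 : ℝ) R, y ^ k * (R - y) ^ 2
      = R ^ (k + 3) * (1 / (k + 1) - 2 / (k + 2) + 1 / (k + 3)) := by
    rw [← intervalIntegral.integral_of_le hR.le]
    have : ∀ y : ℝ, y ^ k * (R - y) ^ 2
        = R ^ 2 * y ^ k - 2 * R * y ^ (k + 1) + y ^ (k + 2) := fun y => by ring
    rw [intervalIntegral.integral_congr (fun y _ => this y)]
    have i1 : IntervalIntegrable (fun y : ℝ => R ^ 2 * y ^ k) volume 0 R :=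
      (intervalIntegral.intervalIntegrable_pow k).const_mul _
    have i2 : IntervalIntegrable (fun y : ℝ => 2 * R * y ^ (k + 1)) volume 0 R :=
      (intervalIntegral.intervalIntegrable_pow (k + 1)).const_mul _
    have i3 : IntervalIntegrable (fun y : ℝ => y ^ (k + 2)) volume 0 R :=
      intervalIntegral.intervalIntegrable_pow (k + 2)
    rw [intervalIntegral.integral_add (i1.sub i2) i3, intervalIntegral.integral_sub i1 i2]
    simp
    have hk1 : ((k : ℝ) + 1) ≠ 0 := by positivity
    have hk2 : ((k : ℝ) + 2) ≠ 0 := by positivity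
    have hk3 : ((k : ℝ) + 3) ≠ 0 := by positivity
    field_simp
    ring
  rw [hradial, hIoi, hval]
  have hk1 : ((k : ℝ) + 1) ≠ 0 := by positivity
  have hk2 : ((k : ℝ) + 2) ≠ 0 := by positivity
  have hk3 : ((k : ℝ) + 3) ≠ 0 := by positivity
  have hR0 : R ≠ 0 := hR.ne'
  push_cast
  field_simp
  ring
end
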